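/- Under the inner product rule, the observable increases by at most k−1 at each step: if B_1, …, B_k ∈ ℝ^d, ‖V‖ ≤ 1, V is added to the bin h minimizing ⟨V, B_h⟩, and S, S' denote Σ_{i<j}‖B_i − B_j‖² before and after, then S' ≤ S + (k−1). -/

import Mathlib

open scoped RealInnerProductSpace

theorem observable_increase_bound (d k : ℕ) (hk : 2 ≤ k)
    (B : Fin k → EuclideanSpace ℝ (Fin d))
    (V : EuclideanSpace ℝ (Fin d)) (hV : ‖V‖ ≤ 1) (h : Fin k)
    (hrule : ∀ i, ⟪V, B h⟫ ≤ ⟪V, B i⟫)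
    (B' : Fin k → EuclideanSpace ℝ (Fin d))
    (hB' : ∀ i, B' i = if i = h then B i + V else B i) :
    (∑ p ∈ Finset.univ.filter (fun p : Fin k × Fin k => p.1 < p.2),
        ‖B' p.1 - B' p.2‖ ^ 2) ≤
      (∑ p ∈ Finset.univ.filter (fun p : Fin k × Fin k => p.1 < p.2),
        ‖B p.1 - B p.2‖ ^ 2) + (k - 1 : ℝ) := by
  classical
  set P := Finset.univ.filter (fun p : Fin k × Fin k => p.1 < p.2) with hP
  have hV2 : ‖V‖ ^ 2 ≤ 1 := by nlinarith [norm_nonneg V]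
  have key : ∀ p ∈ P, ‖B' p.1 - B' p.2‖ ^ 2 ≤
      ‖B p.1 - B p.2‖ ^ 2 + (if p.1 = h ∨ p.2 = h then (1:ℝ) else 0) := by
    intro p hp
    have hlt : p.1 < p.2 := by simpa [hP] using hp
    rw [hB' p.1, hB' p.2]
    by_cases h1 : p.1 = h
    · have h2 : ¬ p.2 = h := by
        intro h2; rw [h1, h2] at hlt; exact lt_irrefl _ hlt
      have hrw : B h + V - B p.2 = (B h - B p.2) + V := by abel
      have hexp := @norm_add_sq_real (EuclideanSpace ℝ (Fin d)) _ _ (B h - B p.2) V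
      have hin : ⟪B h - B p.2, V⟫ = ⟪V, B h⟫ - ⟪V, B p.2⟫ := by
        rw [inner_sub_left, real_inner_comm (B h) V, real_inner_comm (B p.2) V]
      have := hrule p.2
      simp only [h1, h2, eq_self_iff_true, true_or, if_true, if_false]
      rw [hrw, hexp]
      nlinarith
    · by_cases h2 : p.2 = h
      · have hrw : B p.1 - (B h + V) = (B p.1 - B h) - V := by abel
        have hexp := @norm_sub_sq_real (EuclideanSpace ℝ (Fin d)) _ _ (B p.1 - B h) V
        have hin : ⟪B p.1 - B h, V⟫ = ⟪V, B p.1⟫ - ⟪V, B h⟫ := by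
          rw [inner_sub_left, real_inner_comm (B p.1) V, real_inner_comm (B h) V]
        have := hrule p.1
        simp only [h1, h2, eq_self_iff_true, or_true, if_true, if_false]
        rw [hrw, hexp]
        nlinarith
      · simp [h1, h2]
  have hcard : (P.filter (fun p : Fin k × Fin k => p.1 = h ∨ p.2 = h)).card = k - 1 := by
    have : (P.filter (fun p : Fin k × Fin k => p.1 = h ∨ p.2 = h)).card
        = (Finset.univ.erase h).card := by
      apply Finset.card_nbij' (fun p => if p.1 = h then p.2 else p.1)
        (fun m => if m < h then (m, h) else (h, m))
      · intro p hp
        simp only [hP, Finset.mem_coe, Finset.mem_filter, Finset.mem_univ, true_and] at hp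
        obtain ⟨hlt, hc⟩ := hp
        rcases hc with hc | hc
        · simp only [hc, if_true, Finset.mem_coe, Finset.mem_erase, Finset.mem_univ, and_true]
          intro hh; rw [hc, hh] at hlt; exact lt_irrefl _ hlt
        · have h1 : p.1 ≠ h := by intro hh; rw [hh, hc] at hlt; exact lt_irrefl _ hlt
          simp only [h1, if_neg h1, Finset.mem_coe, Finset.mem_erase, Finset.mem_univ, and_true]
          exact h1
      · intro m hm
        simp only [Finset.mem_coe, Finset.mem_erase, Finset.mem_univ, and_true] at hm
        by_cases hlt : m < h
        · beta_reduce
          rw [if_pos hlt]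
          exact Finset.mem_filter.mpr ⟨Finset.mem_filter.mpr ⟨Finset.mem_univ _, hlt⟩,
            Or.inr rfl⟩
        · beta_reduce
          rw [if_neg hlt]
          exact Finset.mem_filter.mpr ⟨Finset.mem_filter.mpr ⟨Finset.mem_univ _,
            lt_of_le_of_ne (not_lt.mp hlt) (Ne.symm hm)⟩, Or.inl rfl⟩
      · intro p hp
        simp only [hP, Finset.mem_coe, Finset.mem_filter, Finset.mem_univ, true_and] at hp
        obtain ⟨hlt, hc⟩ := hp
        rcases hc with hc | hc
        · subst hc
          beta_reduce
          rw [if_pos rfl, if_neg (asymm hlt)]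
        · subst hc
          beta_reduce
          rw [if_neg (ne_of_lt hlt), if_pos hlt]
      · intro m hm
        simp only [Finset.mem_coe, Finset.mem_erase, Finset.mem_univ, and_true] at hm
        by_cases hlt : m < h
        · simp [hlt, hm]
        · have hne : h ≠ m := Ne.symm hm
          simp [hlt, hne]
    rw [this, Finset.card_erase_of_mem (Finset.mem_univ h)]
    simp
  calc (∑ p ∈ P, ‖B' p.1 - B' p.2‖ ^ 2)
      ≤ ∑ p ∈ P, (‖B p.1 - B p.2‖ ^ 2 + (if p.1 = h ∨ p.2 = h then (1:ℝ) else 0)) :=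
        Finset.sum_le_sum key
    _ = (∑ p ∈ P, ‖B p.1 - B p.2‖ ^ 2)
        + ∑ p ∈ P, (if p.1 = h ∨ p.2 = h then (1:ℝ) else 0) := Finset.sum_add_distrib
    _ ≤ (∑ p ∈ P, ‖B p.1 - B p.2‖ ^ 2) + (k - 1 : ℝ) := by
        gcongr
        rw [← Finset.sum_filter, Finset.sum_const, hcard, nsmul_eq_mul, mul_one]
        have : (1:ℕ) ≤ k := le_trans (by norm_num) hk
        push_cast [Nat.cast_sub this]
        ring_nf
        exact le_refl _
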